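/- arXiv:math/0601172 — 2 statements merged into one kernel-verified Lean document; each statement's English description precedes it below -/
import Mathlib

section
/- Let t be a positive integer such that every finite graph with no K_{t+1}-minor is t-colourable (i.e., Hadwiger's Conjecture holds for t). Then every finite graph G with η(G) ≥ t satisfies (2η(G) − t)(2α(G) − 1) ≥ 2|V(G)| − t. -/
open SimpleGraph

/-- A set of vertices is independent: no two of its vertices are adjacent. -/
def IsIndepSet {V : Type*} (G : SimpleGraph V) (s : Set V) : Prop :=
  s.Pairwise fun a b => ¬ G.Adj a b

/-- The independence number of a graph. -/
noncomputable def indepNum {V : Type*} [Fintype V] (G : SimpleGraph V) : ℕ :=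
  sSup {n | ∃ s : Finset V, _root_.IsIndepSet G ↑s ∧ s.card = n}

/-- A set of vertices is connected if it induces a connected subgraph. -/
def IsConnSet {V : Type*} (G : SimpleGraph V) (s : Set V) : Prop :=
  (G.induce s).Connected

/-- A set of vertices is dominating if every vertex outside it has a neighbour in it. -/
def IsDomSet {V : Type*} (G : SimpleGraph V) (s : Set V) : Prop :=
  ∀ v ∉ s, ∃ u ∈ s, G.Adj u v

/-- `G` has a `K_n`-minor, witnessed by `n` pairwise disjoint nonempty connected
branch sets with an edge between each pair. -/
def HasCliqueMinor {V : Type*} (G : SimpleGraph V) (n : ℕ) : Prop :=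
  ∃ B : Fin n → Set V,
    (∀ i, (B i).Nonempty) ∧
    (∀ i, IsConnSet G (B i)) ∧
    (Pairwise fun i j => Disjoint (B i) (B j)) ∧
    (Pairwise fun i j => ∃ u ∈ B i, ∃ v ∈ B j, G.Adj u v)

/-- The Hadwiger number: the largest `n` such that `K_n` is a minor of `G`. -/
noncomputable def hadwigerNum {V : Type*} [Fintype V] (G : SimpleGraph V) : ℕ :=
  sSup {n | HasCliqueMinor G n}

section Basics
variable {V : Type*} [Fintype V] (G : SimpleGraph V)

lemma indep_bddAbove : BddAbove {n | ∃ s : Finset V, _root_.IsIndepSet G ↑s ∧ s.card = n} := by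
  refine ⟨Fintype.card V, ?_⟩
  rintro n ⟨s, -, rfl⟩
  exact s.card_le_univ

lemma card_le_indepNum {s : Finset V} (hs : _root_.IsIndepSet G ↑s) : s.card ≤ _root_.indepNum G :=
  le_csSup (indep_bddAbove G) ⟨s, hs, rfl⟩

lemma one_le_indepNum [Nonempty V] : 1 ≤ _root_.indepNum G := by
  classical
  have := card_le_indepNum G (s := {Classical.arbitrary V}) (by simp [_root_.IsIndepSet])
  simpa using this

lemma card_le_mul_indepNum (h : G.Colorable t) : Fintype.card V ≤ t * _root_.indepNum G := by
  classical
  obtain ⟨C⟩ := h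
  have h1 : (Finset.univ : Finset V).card
      = ∑ i : Fin t, (Finset.univ.filter fun v => C v = i).card :=
    Finset.card_eq_sum_card_fiberwise (fun v _ => Finset.mem_univ (C v))
  have h2 : ∀ i : Fin t, (Finset.univ.filter fun v => C v = i).card ≤ _root_.indepNum G := by
    intro i
    refine card_le_indepNum G ?_
    intro a ha b hb hne hadj
    simp only [Finset.coe_filter, Set.mem_setOf_eq] at ha hb
    exact C.valid hadj (ha.2.trans hb.2.symm)
  calc Fintype.card V = _ := h1
    _ ≤ ∑ _i : Fin t, _root_.indepNum G := Finset.sum_le_sum fun i _ => h2 i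
    _ = t * _root_.indepNum G := by simp [Finset.sum_const, mul_comm]

lemma hasCliqueMinor_mono {n m : ℕ} (h : HasCliqueMinor G n) (hmn : m ≤ n) :
    HasCliqueMinor G m := by
  obtain ⟨B, h1, h2, h3, h4⟩ := h
  refine ⟨fun i => B (Fin.castLE hmn i), fun i => h1 _, fun i => h2 _, ?_, ?_⟩
  · intro i j hij
    exact h3 fun h => hij (Fin.castLE_injective hmn h)
  · intro i j hij
    exact h4 fun h => hij (Fin.castLE_injective hmn h)

lemma hasCliqueMinor_card_le {n : ℕ} (h : HasCliqueMinor G n) : n ≤ Fintype.card V := by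
  classical
  obtain ⟨B, h1, -, h3, -⟩ := h
  choose f hf using h1
  have : Function.Injective f := by
    intro i j hij
    by_contra hne
    exact (h3 hne).ne_of_mem (hf i) (hij ▸ hf j) rfl
  simpa using Fintype.card_le_of_injective f this

lemma hadwiger_bddAbove : BddAbove {n | HasCliqueMinor G n} :=
  ⟨Fintype.card V, fun _ h => hasCliqueMinor_card_le G h⟩

lemma hasCliqueMinor_zero : HasCliqueMinor G 0 :=
  ⟨fun i => i.elim0, fun i => i.elim0, fun i => i.elim0, fun i => i.elim0, fun i => i.elim0⟩

lemma hasCliqueMinor_hadwigerNum : HasCliqueMinor G (hadwigerNum G) := by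
  have h0 : (0 : ℕ) ∈ {n | HasCliqueMinor G n} := hasCliqueMinor_zero G
  exact Nat.sSup_mem ⟨0, h0⟩ (hadwiger_bddAbove G)

lemma le_hadwigerNum {n : ℕ} (h : HasCliqueMinor G n) : n ≤ hadwigerNum G :=
  le_csSup (hadwiger_bddAbove G) h

lemma hadwigerNum_le_card : hadwigerNum G ≤ Fintype.card V :=
  hasCliqueMinor_card_le G (hasCliqueMinor_hadwigerNum G)

end Basics

section Induced
variable {V : Type*} (G : SimpleGraph V) (s : Set V)

lemma isConnSet_image {B : Set ↥s} (h : IsConnSet (G.induce s) B) :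
    IsConnSet G (Subtype.val '' B) := by
  have iso : (G.induce s).induce B ≃g G.induce (Subtype.val '' B) := by
    refine ⟨Equiv.Set.image _ B Subtype.val_injective, ?_⟩
    intro a b
    simp
  exact iso.connected_iff.mp h

lemma hasCliqueMinor_induce {n : ℕ} (h : HasCliqueMinor (G.induce s) n) :
    HasCliqueMinor G n := by
  obtain ⟨B, h1, h2, h3, h4⟩ := h
  refine ⟨fun i => Subtype.val '' B i, fun i => (h1 i).image _,
    fun i => isConnSet_image G s (h2 i), ?_, ?_⟩
  · intro i j hij
    exact (Set.disjoint_image_iff Subtype.val_injective).2 (h3 hij)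
  · intro i j hij
    obtain ⟨u, hu, v, hv, hadj⟩ := h4 hij
    exact ⟨u.val, Set.mem_image_of_mem _ hu, v.val, Set.mem_image_of_mem _ hv, hadj⟩

lemma isIndepSet_image {I : Set ↥s} (h : _root_.IsIndepSet (G.induce s) I) :
    _root_.IsIndepSet G (Subtype.val '' I) := by
  rintro a ⟨x, hx, rfl⟩ b ⟨y, hy, rfl⟩ hne hadj
  exact h hx hy (fun e => hne (by rw [e])) hadj

variable [Fintype V] [Fintype ↥s]

lemma indepNum_induce_le : _root_.indepNum (G.induce s) ≤ _root_.indepNum G := by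
  classical
  refine csSup_le ⟨0, ⟨∅, by simp [_root_.IsIndepSet], rfl⟩⟩ ?_
  rintro n ⟨F, hF, rfl⟩
  have hcard : (F.map ⟨Subtype.val, Subtype.val_injective⟩).card = F.card := Finset.card_map _
  rw [← hcard]
  refine card_le_indepNum G ?_
  have : ((F.map ⟨Subtype.val, Subtype.val_injective⟩ : Finset V) : Set V)
      = Subtype.val '' (F : Set ↥s) := by
    ext x; simp
  rw [this]
  exact isIndepSet_image G s hF

lemma hadwigerNum_induce_le : hadwigerNum (G.induce s) ≤ hadwigerNum G := by
  refine csSup_le ⟨0, hasCliqueMinor_zero _⟩ ?_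
  intro n hn
  exact le_hadwigerNum G (hasCliqueMinor_induce G s hn)

end Induced

lemma hasCliqueMinor_succ_of_dom {V : Type*} (G : SimpleGraph V) (D : Set V)
    (hne : D.Nonempty) (hConn : IsConnSet G D) (hDom : IsDomSet G D) {m : ℕ}
    (h : HasCliqueMinor (G.induce Dᶜ) m) : HasCliqueMinor G (m + 1) := by
  obtain ⟨B, h1, h2, h3, h4⟩ := h
  set B' : Fin (m + 1) → Set V := Fin.cases D (fun i => Subtype.val '' B i) with hB'
  have hBc : ∀ i, Subtype.val '' B i ⊆ Dᶜ := by
    rintro i x ⟨y, hy, rfl⟩; exact y.prop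
  have edgeDB : ∀ j, ∃ u ∈ D, ∃ v ∈ Subtype.val '' B j, G.Adj u v := by
    intro j
    obtain ⟨v, hv⟩ := (h1 j).image Subtype.val
    obtain ⟨u, hu, hadj⟩ := hDom v (hBc j hv)
    exact ⟨u, hu, v, hv, hadj⟩
  refine ⟨B', ?_, ?_, ?_, ?_⟩
  · intro i
    induction i using Fin.cases with
    | zero => exact hne
    | succ i => exact (h1 i).image _
  · intro i
    induction i using Fin.cases with
    | zero => exact hConn
    | succ i => exact isConnSet_image G Dᶜ (h2 i)
  · intro i j hij
    induction i using Fin.cases with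
    | zero =>
      induction j using Fin.cases with
      | zero => exact absurd rfl hij
      | succ j =>
        exact Set.disjoint_left.2 fun x hx hx' => (hBc j hx') hx
    | succ i =>
      induction j using Fin.cases with
      | zero => exact Set.disjoint_left.2 fun x hx hx' => (hBc i hx) hx'
      | succ j =>
        exact (Set.disjoint_image_iff Subtype.val_injective).2
          (h3 fun e => hij (congrArg Fin.succ e))
  · intro i j hij
    induction i using Fin.cases with
    | zero =>
      induction j using Fin.cases with
      | zero => exact absurd rfl hij
      | succ j => exact edgeDB j
    | succ i =>
      induction j using Fin.cases with
      | zero =>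
        obtain ⟨u, hu, v, hv, hadj⟩ := edgeDB i
        exact ⟨v, hv, u, hu, hadj.symm⟩
      | succ j =>
        obtain ⟨u, hu, v, hv, hadj⟩ := h4 (fun e => hij (congrArg Fin.succ e))
        exact ⟨u.val, Set.mem_image_of_mem _ hu, v.val, Set.mem_image_of_mem _ hv, hadj⟩

lemma exists_indepNum_finset {V : Type*} [Fintype V] (G : SimpleGraph V) :
    ∃ F : Finset V, _root_.IsIndepSet G ↑F ∧ F.card = _root_.indepNum G := by
  have h0 : (0 : ℕ) ∈ {n | ∃ s : Finset V, _root_.IsIndepSet G ↑s ∧ s.card = n} :=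
    ⟨∅, by simp [_root_.IsIndepSet], rfl⟩
  exact Nat.sSup_mem ⟨0, h0⟩ (indep_bddAbove G)

lemma isConnSet_singleton {V : Type*} (G : SimpleGraph V) (u : V) :
    IsConnSet G {u} := by
  unfold IsConnSet
  rw [SimpleGraph.induce_singleton_eq_top]
  haveI : Nonempty ↥({u} : Set V) := ⟨⟨u, rfl⟩⟩
  exact connected_top

lemma isConnSet_insert {V : Type*} {G : SimpleGraph V} {s : Set V} {u c : V}
    (hs : IsConnSet G s) (hc : c ∈ s) (hadj : G.Adj u c) :
    IsConnSet G (insert u s) := by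
  have := connected_induce_union (SimpleGraph.Connected.preconnected (isConnSet_singleton G u))
    (SimpleGraph.Connected.preconnected hs) rfl hc hadj
  simpa [Set.singleton_union, IsConnSet] using this

lemma exists_boundary_edge {V : Type*} {G : SimpleGraph V} {S : Set V} :
    ∀ {v c : V}, G.Walk v c → v ∉ S → c ∈ S → ∃ x ∉ S, ∃ u ∈ S, G.Adj x u := by
  intro v c w
  induction w with
  | nil => exact fun hv hc => absurd hc hv
  | @cons a b d h p ih =>
    intro hv hc
    by_cases hb : b ∈ S
    · exact ⟨a, hv, b, hb, h⟩
    · exact ih hb hc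

lemma dm_aux {V : Type*} [Fintype V] [DecidableEq V] {G : SimpleGraph V} (hconn : G.Connected) :
    ∀ (k : ℕ) (C I : Finset V), (Finset.univ \ C).card ≤ k → I ⊆ C → C.Nonempty →
      _root_.IsIndepSet G ↑I → IsConnSet G ↑C → C.card + 1 ≤ 2 * I.card →
      ∃ D : Finset V, D.Nonempty ∧ IsConnSet G ↑D ∧ IsDomSet G ↑D ∧
        D.card + 1 ≤ 2 * _root_.indepNum G := by
  intro k
  induction k with
  | zero =>
    intro C I hk hIC hCne hI hC hcard
    by_cases hdom : IsDomSet G ↑C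
    · exact ⟨C, hCne, hC, hdom, hcard.trans (by
        have := card_le_indepNum G hI; omega)⟩
    · exfalso
      simp only [IsDomSet, not_forall] at hdom
      obtain ⟨v, hv, -⟩ := hdom
      have : v ∈ Finset.univ \ C := by
        simp only [Finset.mem_sdiff, Finset.mem_univ, true_and]
        exact fun h => hv (by exact_mod_cast h)
      have := Finset.card_pos.2 ⟨v, this⟩
      omega
  | succ k ih =>
    intro C I hk hIC hCne hI hC hcard
    by_cases hdom : IsDomSet G ↑C
    · exact ⟨C, hCne, hC, hdom, hcard.trans (by
        have := card_le_indepNum G hI; omega)⟩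
    · simp only [IsDomSet, not_forall] at hdom
      obtain ⟨v, hvC, hvN⟩ := hdom
      push_neg at hvN
      -- S = closed neighbourhood of C
      set S : Set V := ↑C ∪ {x | ∃ u ∈ (↑C : Set V), G.Adj u x} with hS
      have hvS : v ∉ S := by
        rintro (h | ⟨u, hu, hadj⟩)
        · exact hvC h
        · exact hvN u hu hadj
      obtain ⟨c₀, hc₀⟩ := hCne
      have hc₀S : c₀ ∈ S := Or.inl (by exact_mod_cast hc₀)
      obtain ⟨x, hxS, u, huS, hxu⟩ :=
        exists_boundary_edge ((hconn.preconnected v c₀).some) hvS hc₀S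
      have hxC : x ∉ (↑C : Set V) := fun h => hxS (Or.inl h)
      have hxN : ∀ c ∈ (↑C : Set V), ¬G.Adj c x := fun c hc hadj =>
        hxS (Or.inr ⟨c, hc, hadj⟩)
      have huC : u ∉ (↑C : Set V) := fun h => hxS (Or.inr ⟨u, h, hxu.symm⟩)
      obtain ⟨c', hc', hc'u⟩ : ∃ c' ∈ (↑C : Set V), G.Adj c' u := by
        rcases huS with h | h
        · exact absurd h huC
        · exact h
      have hxne : x ≠ u := fun h => hxS (h ▸ huS)
      set C' : Finset V := insert x (insert u C) with hC'
      set I' : Finset V := insert x I with hI'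
      have hxI : x ∉ I := fun h => hxC (hIC h)
      have hxC2 : x ∉ insert u C := by
        simp only [Finset.mem_insert]
        rintro (h | h)
        · exact hxne h
        · exact hxC (by exact_mod_cast h)
      have huC2 : u ∉ C := fun h => huC (by exact_mod_cast h)
      have hCc' : C'.card = C.card + 2 := by
        rw [hC', Finset.card_insert_of_notMem hxC2, Finset.card_insert_of_notMem huC2]
      have hIc' : I'.card = I.card + 1 := Finset.card_insert_of_notMem hxI
      have hC'conn : IsConnSet G ↑C' := by
        have h1 : IsConnSet G (insert u (↑C : Set V)) := isConnSet_insert hC hc' hc'u.symm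
        have h2 : IsConnSet G (insert x (insert u (↑C : Set V))) :=
          isConnSet_insert h1 (Set.mem_insert u _) hxu
        simpa [hC'] using h2
      have hI'ind : _root_.IsIndepSet G ↑I' := by
        rw [hI', Finset.coe_insert]
        have hsym : Symmetric (fun a b => ¬G.Adj a b) := fun a b h hadj => h hadj.symm
        show (insert x (↑I : Set V)).Pairwise fun a b => ¬G.Adj a b
        haveI : Std.Symm (fun a b => ¬G.Adj a b) := ⟨fun a b h => hsym h⟩
        rw [Set.pairwise_insert_of_symmetric]
        exact ⟨hI, fun b hb _ hadj => hxN b (hIC (by exact_mod_cast hb)) hadj.symm⟩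
      have hsub : I' ⊆ C' := by
        rw [hI', hC']
        exact Finset.insert_subset_insert _ (hIC.trans (Finset.subset_insert _ _))
      have hmeas : (Finset.univ \ C').card ≤ k := by
        have h1 : (Finset.univ \ C).card = Fintype.card V - C.card := by
          rw [Finset.card_sdiff_of_subset (Finset.subset_univ _), Finset.card_univ]
        have h2 : (Finset.univ \ C').card = Fintype.card V - C'.card := by
          rw [Finset.card_sdiff_of_subset (Finset.subset_univ _), Finset.card_univ]
        have h3 : C'.card ≤ Fintype.card V := by
          rw [← Finset.card_univ]; exact Finset.card_le_card (Finset.subset_univ _)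
        omega
      exact ih C' I' hmeas hsub ⟨x, Finset.mem_insert_self _ _⟩ hI'ind hC'conn (by omega)

lemma duchet_meyniel {V : Type*} [Fintype V] {G : SimpleGraph V} (hconn : G.Connected) :
    ∃ D : Finset V, D.Nonempty ∧ IsConnSet G ↑D ∧ IsDomSet G ↑D ∧
      D.card + 1 ≤ 2 * _root_.indepNum G := by
  classical
  haveI : Nonempty V := hconn.nonempty
  obtain ⟨v⟩ := ‹Nonempty V›
  refine dm_aux hconn (Finset.univ \ {v}).card {v} {v} le_rfl (subset_refl _)
    ⟨v, Finset.mem_singleton_self v⟩ (by simp [_root_.IsIndepSet]) ?_ (by simp)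
  simpa using isConnSet_singleton G v

lemma card_compl_add {V : Type*} [Fintype V] (D : Finset V) (s : Set V) [Fintype ↥s]
    (h : s = (↑D : Set V)ᶜ) : Fintype.card ↥s + D.card = Fintype.card V := by
  classical
  have h1 : Nat.card ↥s = Nat.card ↥((↑D : Set V)ᶜ) := by rw [h]
  have h2 : Nat.card ↥((↑D : Set V)ᶜ) = Fintype.card V - D.card := by
    rw [Nat.card_eq_fintype_card, Fintype.card_compl_set]
    simp
  have h3 : D.card ≤ Fintype.card V := Finset.card_le_univ D
  rw [Nat.card_eq_fintype_card] at h1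
  omega

lemma main_aux (t : ℕ) (ht : 1 ≤ t)
    (hadw : ∀ (W : Type) [Fintype W] (H : SimpleGraph W),
      ¬ HasCliqueMinor H (t + 1) → H.Colorable t) :
    ∀ (n : ℕ) (V : Type) [Fintype V] (G : SimpleGraph V), Fintype.card V ≤ n →
      t ≤ hadwigerNum G →
      (2 * (Fintype.card V : ℤ) - t) ≤ (2 * hadwigerNum G - t) * (2 * _root_.indepNum G - 1) := by
  intro n
  induction n with
  | zero =>
    intro V _ G hn hG
    have h1 : hadwigerNum G ≤ Fintype.card V := hadwigerNum_le_card G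
    omega
  | succ n IH =>
    intro V _ G hn hG
    classical
    have hηcard : hadwigerNum G ≤ Fintype.card V := hadwigerNum_le_card G
    have hVpos : 0 < Fintype.card V := by omega
    haveI : Nonempty V := Fintype.card_pos_iff.mp hVpos
    have hα : 1 ≤ _root_.indepNum G := one_le_indepNum G
    have ht1 : (1:ℤ) ≤ (t:ℤ) := by exact_mod_cast ht
    have ha1 : (1:ℤ) ≤ (_root_.indepNum G : ℤ) := by exact_mod_cast hα
    by_cases hK : HasCliqueMinor G (t + 1)
    · -- η ≥ t + 1
      have hη1 : t + 1 ≤ hadwigerNum G := le_hadwigerNum G hK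
      have hη1Z : (t:ℤ) + 1 ≤ (hadwigerNum G : ℤ) := by exact_mod_cast hη1
      by_cases hc : G.Connected
      · -- connected: Duchet–Meyniel
        obtain ⟨D, hDne, hDconn, hDdom, hDcard⟩ := duchet_meyniel hc
        set s : Set V := (↑D : Set V)ᶜ with hs
        have hcards : Fintype.card ↥s + D.card = Fintype.card V :=
          card_compl_add D s hs
        have hcardZ : (Fintype.card ↥s : ℤ) + (D.card : ℤ) = (Fintype.card V : ℤ) := by
          exact_mod_cast hcards
        have hα' : _root_.indepNum (G.induce s) ≤ _root_.indepNum G := indepNum_induce_le G s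
        have hα'Z : (_root_.indepNum (G.induce s) : ℤ) ≤ (_root_.indepNum G : ℤ) := by exact_mod_cast hα'
        have hDle : 1 ≤ D.card := Finset.card_pos.2 hDne
        have hdZ : (D.card : ℤ) + 1 ≤ 2 * (_root_.indepNum G : ℤ) := by exact_mod_cast hDcard
        have hlift : ∀ m, HasCliqueMinor (G.induce s) m → m + 1 ≤ hadwigerNum G := by
          intro m hm
          exact le_hadwigerNum G
            (hasCliqueMinor_succ_of_dom G ↑D (by exact_mod_cast hDne) hDconn hDdom hm)
        have hwn : Fintype.card ↥s ≤ n := by omega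
        by_cases hK' : HasCliqueMinor (G.induce s) t
        · have hG' : t ≤ hadwigerNum (G.induce s) := le_hadwigerNum _ hK'
          have hW1 : t ≤ Fintype.card ↥s := hasCliqueMinor_card_le _ hK'
          haveI : Nonempty ↥s := Fintype.card_pos_iff.mp (by omega)
          have hαs : 1 ≤ _root_.indepNum (G.induce s) := one_le_indepNum _
          have hαsZ : (1:ℤ) ≤ (_root_.indepNum (G.induce s) : ℤ) := by exact_mod_cast hαs
          have IHres := IH ↥s (G.induce s) hwn hG'
          have hη' : hadwigerNum (G.induce s) + 1 ≤ hadwigerNum G :=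
            hlift _ (hasCliqueMinor_hadwigerNum _)
          have hη'Z : (hadwigerNum (G.induce s) : ℤ) + 1 ≤ (hadwigerNum G : ℤ) := by
            exact_mod_cast hη'
          have key : (2 * (hadwigerNum (G.induce s) : ℤ) - t)
                * (2 * (_root_.indepNum (G.induce s) : ℤ) - 1)
              ≤ (2 * (hadwigerNum G : ℤ) - 2 - t) * (2 * (_root_.indepNum G : ℤ) - 1) :=
            mul_le_mul (by linarith) (by linarith) (by linarith) (by linarith)
          have expand : (2 * (hadwigerNum G : ℤ) - 2 - t) * (2 * (_root_.indepNum G : ℤ) - 1)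
                + 2 * (2 * (_root_.indepNum G : ℤ) - 1)
              = (2 * (hadwigerNum G : ℤ) - t) * (2 * (_root_.indepNum G : ℤ) - 1) := by ring
          linarith [IHres]
        · have hK'' : ¬HasCliqueMinor (G.induce s) (t + 1) := fun h =>
            hK' (hasCliqueMinor_mono _ h (Nat.le_succ t))
          have hcol := card_le_mul_indepNum (G.induce s) (hadw ↥s (G.induce s) hK'')
          have hcolZ : (Fintype.card ↥s : ℤ) ≤ (t:ℤ) * (_root_.indepNum (G.induce s) : ℤ) := by
            exact_mod_cast hcol
          have hta : (t:ℤ) * (_root_.indepNum (G.induce s) : ℤ) ≤ (t:ℤ) * (_root_.indepNum G : ℤ) :=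
            mul_le_mul_of_nonneg_left hα'Z (by linarith)
          have key : ((t:ℤ) + 2) * (2 * (_root_.indepNum G : ℤ) - 1)
              ≤ (2 * (hadwigerNum G : ℤ) - t) * (2 * (_root_.indepNum G : ℤ) - 1) :=
            mul_le_mul_of_nonneg_right (by linarith) (by linarith)
          have expand : ((t:ℤ) + 2) * (2 * (_root_.indepNum G : ℤ) - 1)
              = 2 * ((t:ℤ) * (_root_.indepNum G : ℤ)) + 4 * (_root_.indepNum G : ℤ) - t - 2 := by ring
          linarith
      · -- disconnected
        obtain ⟨v, w0, hnr⟩ : ∃ v w, ¬G.Reachable v w := by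
          by_contra h
          push_neg at h
          exact hc ((connected_iff G).mpr ⟨fun a b => h a b, ‹Nonempty V›⟩)
        set s : Set V := {u | G.Reachable v u} with hsdef
        have hvs : v ∈ s := Set.mem_setOf.mpr (Reachable.refl v)
        have hw0 : w0 ∈ sᶜ := hnr
        have hcross : ∀ a ∈ s, ∀ b ∈ sᶜ, ¬G.Adj a b := by
          intro a ha b hb hadj
          exact hb (ha.trans hadj.reachable)
        obtain ⟨F1, hF1i, hF1c⟩ := exists_indepNum_finset (G.induce s)
        obtain ⟨F2, hF2i, hF2c⟩ := exists_indepNum_finset (G.induce sᶜ)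
        set M1 : Finset V := F1.map ⟨Subtype.val, Subtype.val_injective⟩ with hM1
        set M2 : Finset V := F2.map ⟨Subtype.val, Subtype.val_injective⟩ with hM2
        have hM1s : ∀ x ∈ M1, x ∈ s := by
          intro x hx
          simp only [hM1, Finset.mem_map, Function.Embedding.coeFn_mk] at hx
          obtain ⟨y, -, rfl⟩ := hx
          exact y.prop
        have hM2s : ∀ x ∈ M2, x ∈ sᶜ := by
          intro x hx
          simp only [hM2, Finset.mem_map, Function.Embedding.coeFn_mk] at hx
          obtain ⟨y, -, rfl⟩ := hx
          exact y.prop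
        have hM1coe : (↑M1 : Set V) = Subtype.val '' (↑F1 : Set ↥s) := by
          ext x; simp [hM1]
        have hM2coe : (↑M2 : Set V) = Subtype.val '' (↑F2 : Set ↥sᶜ) := by
          ext x; simp [hM2]
        have hdisj : Disjoint M1 M2 := by
          rw [Finset.disjoint_left]
          intro x hx1 hx2
          exact hM2s x hx2 (hM1s x hx1)
        have hunion : _root_.IsIndepSet G ↑(M1 ∪ M2) := by
          rw [Finset.coe_union]
          intro x hx y hy hne hadj
          have h1 := isIndepSet_image G s hF1i
          have h2 := isIndepSet_image G sᶜ hF2i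
          rw [← hM1coe] at h1
          rw [← hM2coe] at h2
          rcases hx with hx | hx <;> rcases hy with hy | hy
          · exact h1 hx hy hne hadj
          · exact hcross x (hM1s x hx) y (hM2s y hy) hadj
          · exact hcross y (hM1s y hy) x (hM2s x hx) hadj.symm
          · exact h2 hx hy hne hadj
        have hαsum : _root_.indepNum (G.induce s) + _root_.indepNum (G.induce sᶜ) ≤ _root_.indepNum G := by
          have := card_le_indepNum G hunion
          rwa [Finset.card_union_of_disjoint hdisj, hM1, hM2, Finset.card_map,
            Finset.card_map, hF1c, hF2c] at this
        have hcards : Fintype.card ↥s + Fintype.card ↥sᶜ = Fintype.card V := by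
          have hle : Fintype.card ↥s ≤ Fintype.card V :=
            Fintype.card_le_of_injective Subtype.val Subtype.val_injective
          rw [Fintype.card_compl_set]
          omega
        haveI : Nonempty ↥s := ⟨⟨v, hvs⟩⟩
        haveI : Nonempty ↥sᶜ := ⟨⟨w0, hw0⟩⟩
        have hcard1 : 1 ≤ Fintype.card ↥s := Fintype.card_pos
        have hcard2 : 1 ≤ Fintype.card ↥sᶜ := Fintype.card_pos
        have side : ∀ (s' : Set V) [Fintype ↥s'], Nonempty ↥s' → Fintype.card ↥s' ≤ n →
            2 * (Fintype.card ↥s' : ℤ) - t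
              ≤ (2 * (hadwigerNum G : ℤ) - t) * (2 * (_root_.indepNum (G.induce s') : ℤ) - 1) := by
          intro s' _ hne' hn'
          haveI := hne'
          have hαs' : 1 ≤ _root_.indepNum (G.induce s') := one_le_indepNum _
          have ha'1 : (1:ℤ) ≤ (_root_.indepNum (G.induce s') : ℤ) := by exact_mod_cast hαs'
          by_cases hK' : HasCliqueMinor (G.induce s') t
          · have hG' : t ≤ hadwigerNum (G.induce s') := le_hadwigerNum _ hK'
            have IHres := IH ↥s' (G.induce s') hn' hG'
            have hmono : hadwigerNum (G.induce s') ≤ hadwigerNum G :=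
              hadwigerNum_induce_le G s'
            have hmonoZ : (hadwigerNum (G.induce s') : ℤ) ≤ (hadwigerNum G : ℤ) := by
              exact_mod_cast hmono
            have key : (2 * (hadwigerNum (G.induce s') : ℤ) - t)
                  * (2 * (_root_.indepNum (G.induce s') : ℤ) - 1)
                ≤ (2 * (hadwigerNum G : ℤ) - t) * (2 * (_root_.indepNum (G.induce s') : ℤ) - 1) :=
              mul_le_mul_of_nonneg_right (by linarith) (by linarith)
            linarith [IHres]
          · have hK'' : ¬HasCliqueMinor (G.induce s') (t + 1) := fun h =>
              hK' (hasCliqueMinor_mono _ h (Nat.le_succ t))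
            have hcol := card_le_mul_indepNum (G.induce s') (hadw ↥s' (G.induce s') hK'')
            have hcolZ : (Fintype.card ↥s' : ℤ) ≤ (t:ℤ) * (_root_.indepNum (G.induce s') : ℤ) := by
              exact_mod_cast hcol
            have key : (t:ℤ) * (2 * (_root_.indepNum (G.induce s') : ℤ) - 1)
                ≤ (2 * (hadwigerNum G : ℤ) - t) * (2 * (_root_.indepNum (G.induce s') : ℤ) - 1) :=
              mul_le_mul_of_nonneg_right (by linarith) (by linarith)
            have expand : (t:ℤ) * (2 * (_root_.indepNum (G.induce s') : ℤ) - 1)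
                = 2 * ((t:ℤ) * (_root_.indepNum (G.induce s') : ℤ)) - t := by ring
            linarith
        have b1 := side s ‹_› (by omega)
        have b2 := side sᶜ ‹_› (by omega)
        have hsumZ : (_root_.indepNum (G.induce s) : ℤ) + (_root_.indepNum (G.induce sᶜ) : ℤ)
            ≤ (_root_.indepNum G : ℤ) := by exact_mod_cast hαsum
        have hcardZ : (Fintype.card ↥s : ℤ) + (Fintype.card ↥sᶜ : ℤ)
            = (Fintype.card V : ℤ) := by exact_mod_cast hcards
        have k1 : (2 * (hadwigerNum G : ℤ) - t) * (2 * (_root_.indepNum (G.induce s) : ℤ) - 1)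
              + (2 * (hadwigerNum G : ℤ) - t) * (2 * (_root_.indepNum (G.induce sᶜ) : ℤ) - 1)
            = (2 * (hadwigerNum G : ℤ) - t)
              * (2 * ((_root_.indepNum (G.induce s) : ℤ) + (_root_.indepNum (G.induce sᶜ) : ℤ)) - 2) := by
          ring
        have k2 : (2 * (hadwigerNum G : ℤ) - t)
              * (2 * ((_root_.indepNum (G.induce s) : ℤ) + (_root_.indepNum (G.induce sᶜ) : ℤ)) - 2)
            ≤ (2 * (hadwigerNum G : ℤ) - t) * (2 * (_root_.indepNum G : ℤ) - 2) :=
          mul_le_mul_of_nonneg_left (by linarith) (by linarith)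
        have k3 : (2 * (hadwigerNum G : ℤ) - t) * (2 * (_root_.indepNum G : ℤ) - 2)
            = (2 * (hadwigerNum G : ℤ) - t) * (2 * (_root_.indepNum G : ℤ) - 1)
              - (2 * (hadwigerNum G : ℤ) - t) := by ring
        linarith
    · -- base case: no K_{t+1} minor
      have hcol := card_le_mul_indepNum G (hadw V G hK)
      have hcolZ : (Fintype.card V : ℤ) ≤ (t:ℤ) * (_root_.indepNum G : ℤ) := by exact_mod_cast hcol
      have hte : (t:ℤ) ≤ (hadwigerNum G : ℤ) := by exact_mod_cast hG
      have key : (t:ℤ) * (2 * (_root_.indepNum G : ℤ) - 1)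
          ≤ (2 * (hadwigerNum G : ℤ) - t) * (2 * (_root_.indepNum G : ℤ) - 1) :=
        mul_le_mul_of_nonneg_right (by linarith) (by linarith)
      have expand : (t:ℤ) * (2 * (_root_.indepNum G : ℤ) - 1)
          = 2 * ((t:ℤ) * (_root_.indepNum G : ℤ)) - t := by ring
      linarith

theorem stmt_4 (t : ℕ) (ht : 1 ≤ t)
    (hadw : ∀ (W : Type) [Fintype W] (H : SimpleGraph W),
      ¬ HasCliqueMinor H (t + 1) → H.Colorable t)
    {V : Type} [Fintype V] (G : SimpleGraph V) (hG : t ≤ hadwigerNum G) :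
    (2 * (Fintype.card V : ℤ) - t) ≤ (2 * hadwigerNum G - t) * (2 * _root_.indepNum G - 1) := by
  exact main_aux t ht hadw (Fintype.card V) V G le_rfl hG
end

section
/- Every finite graph G (with at least one vertex) satisfies (2α(G) − 1)·η(G) ≥ |V(G)|. -/
open SimpleGraph

set_option linter.unusedSectionVars false
set_option maxHeartbeats 1600000

section All
variable {V : Type*} [Fintype V] [DecidableEq V] {G : SimpleGraph V} {s : Finset V}

variable (G)

/-- clique minor inside a vertex subset -/
def MIn (s : Finset V) (n : ℕ) : Prop :=
  ∃ B : Fin n → Set V,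
    (∀ i, (B i).Nonempty) ∧
    (∀ i, IsConnSet G (B i)) ∧
    (∀ i, B i ⊆ ↑s) ∧
    (Pairwise fun i j => Disjoint (B i) (B j)) ∧
    (Pairwise fun i j => ∃ u ∈ B i, ∃ v ∈ B j, G.Adj u v)

/-- local independence number -/
noncomputable def la (s : Finset V) : ℕ := by
  classical exact (s.powerset.filter (fun t : Finset V => _root_.IsIndepSet G ↑t)).sup Finset.card

variable {G} 

lemma card_le_la {s t : Finset V} (hts : t ⊆ s) (ht : _root_.IsIndepSet G ↑t) : t.card ≤ la G s := by
  classical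
  unfold la
  exact Finset.le_sup (by simp [Finset.mem_filter, Finset.mem_powerset, hts, ht])

lemma exists_la_witness (s : Finset V) :
    ∃ t : Finset V, t ⊆ s ∧ _root_.IsIndepSet G ↑t ∧ t.card = la G s := by
  classical
  have hne : ((s.powerset.filter (fun t : Finset V => _root_.IsIndepSet G ↑t))).Nonempty :=
    ⟨∅, Finset.mem_filter.mpr ⟨Finset.empty_mem_powerset s, by
      rw [_root_.IsIndepSet, Finset.coe_empty]; exact Set.pairwise_empty _⟩⟩
  obtain ⟨t, ht, hc⟩ := Finset.exists_mem_eq_sup _ hne Finset.card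
  simp only [Finset.mem_filter, Finset.mem_powerset] at ht
  exact ⟨t, ht.1, ht.2, hc.symm⟩

lemma one_le_la {s : Finset V} (hs : s.Nonempty) : 1 ≤ la G s := by
  obtain ⟨v, hv⟩ := hs
  have := card_le_la (G := G) (t := {v}) (by simpa using hv) (by simp [_root_.IsIndepSet])
  simpa using this

lemma mIn_mono {s s' : Finset V} (h : s ⊆ s') {n : ℕ} (hm : MIn G s n) : MIn G s' n := by
  obtain ⟨B, h1, h2, h3, h4, h5⟩ := hm
  exact ⟨B, h1, h2, fun i => (h3 i).trans (by exact_mod_cast h), h4, h5⟩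

lemma mIn_zero (s : Finset V) : MIn G s 0 :=
  ⟨Fin.elim0, fun i => i.elim0, fun i => i.elim0, fun i => i.elim0,
   fun i _ _ => i.elim0, fun i _ _ => i.elim0⟩

lemma mIn_pos {s : Finset V} {n : ℕ} (hm : MIn G s n) (hk : s.card + n ≤ 2 * la G s * n)
    (hs : s.Nonempty) : 1 ≤ n := by
  rcases Nat.eq_zero_or_pos n with h | h
  · subst h
    simp only [Nat.mul_zero, Nat.add_zero, Nat.le_zero] at hk
    exact absurd (Finset.card_eq_zero.mp hk) (Finset.nonempty_iff_ne_empty.mp hs)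
  · exact h



lemma isConnSet_singleton_s10 (v : V) : IsConnSet G {v} := by
  have hne : Nonempty ↥({v} : Set V) := ⟨⟨v, rfl⟩⟩
  refine SimpleGraph.Connected.mk fun a b => ?_
  have : a = b := Subtype.ext (by
    have ha := a.2; have hb := b.2
    simp only [Set.mem_singleton_iff] at ha hb
    rw [ha, hb])
  exact this ▸ SimpleGraph.Reachable.refl a

lemma grow (hs : (G.induce (↑s : Set V)).Connected) :
    ∀ (k : ℕ) (D I : Finset V), (s \ D).card ≤ k → D ⊆ s → I ⊆ D →
      IsConnSet G ↑D → _root_.IsIndepSet G ↑I → D.card + 1 = 2 * I.card →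
    ∃ D' I' : Finset V, D' ⊆ s ∧ I' ⊆ D' ∧ IsConnSet G ↑D' ∧ _root_.IsIndepSet G ↑I' ∧
      D'.card + 1 = 2 * I'.card ∧ ∀ w ∈ s, w ∉ D' → ∃ u ∈ D', G.Adj u w := by
  classical
  intro k
  induction k with
  | zero =>
    intro D I hk hDs hID hconn hind hcard
    refine ⟨D, I, hDs, hID, hconn, hind, hcard, ?_⟩
    intro w hws hwD
    exact absurd (Finset.card_eq_zero.mp (Nat.le_zero.mp hk))
      (Finset.nonempty_iff_ne_empty.mp ⟨w, Finset.mem_sdiff.mpr ⟨hws, hwD⟩⟩)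
  | succ k ih =>
    intro D I hk hDs hID hconn hind hcard
    by_cases hdom : ∀ w ∈ s, w ∉ D → ∃ u ∈ D, G.Adj u w
    · exact ⟨D, I, hDs, hID, hconn, hind, hcard, hdom⟩
    push_neg at hdom
    obtain ⟨w, hws, hwD, hwnb⟩ := hdom
    have hIne : I.Nonempty := by
      rcases I.eq_empty_or_nonempty with h | h
      · subst h; simp at hcard
      · exact h
    obtain ⟨d, hdI⟩ := hIne
    have hdD : d ∈ D := hID hdI
    have hds : d ∈ s := hDs hdD
    set S : Set (↑(↑s : Set V)) := {x | ↑x ∈ D ∨ ∃ u ∈ D, G.Adj u ↑x} with hS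
    have hdS : (⟨d, hds⟩ : ↑(↑s : Set V)) ∈ S := Or.inl hdD
    have hwS : (⟨w, hws⟩ : ↑(↑s : Set V)) ∉ S := by
      rintro (h | ⟨u, hu, hadj⟩)
      · exact hwD h
      · exact hwnb u hu hadj
    obtain ⟨p⟩ := hs.preconnected ⟨d, hds⟩ ⟨w, hws⟩
    obtain ⟨dt, -, hfst, hsnd⟩ := p.exists_boundary_dart S hdS hwS
    set x : V := ↑dt.fst with hxdef
    set y : V := ↑dt.snd with hydef
    have hadjxy : G.Adj x y := dt.adj
    have hys : y ∈ s := dt.snd.2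
    have hxs : x ∈ s := dt.fst.2
    have hyD : y ∉ D := fun h => hsnd (Or.inl h)
    have hynb : ∀ u ∈ D, ¬ G.Adj u y := fun u hu hadj => hsnd (Or.inr ⟨u, hu, hadj⟩)
    have hxD : x ∉ D := fun h => hynb x h hadjxy
    obtain ⟨u, huD, hux⟩ : ∃ u ∈ D, G.Adj u x := by
      rcases hfst with h | h
      · exact absurd h hxD
      · exact h
    have hxy : x ≠ y := hadjxy.ne
    have hyI : y ∉ I := fun h => hyD (hID h)
    refine ih (insert x (insert y D)) (insert y I) ?_ ?_ ?_ ?_ ?_ ?_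
    · have hsub : s \ insert x (insert y D) ⊂ s \ D := by
        refine (Finset.ssubset_iff_of_subset (Finset.sdiff_subset_sdiff le_rfl (by
          intro a ha; exact Finset.mem_insert_of_mem (Finset.mem_insert_of_mem ha)))).mpr ?_
        exact ⟨y, Finset.mem_sdiff.mpr ⟨hys, hyD⟩, by simp⟩
      have := Finset.card_lt_card hsub
      omega
    · intro a ha
      rcases Finset.mem_insert.mp ha with rfl | ha
      · exact hxs
      rcases Finset.mem_insert.mp ha with rfl | ha
      · exact hys
      · exact hDs ha
    · intro a ha
      rcases Finset.mem_insert.mp ha with rfl | ha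
      · exact Finset.mem_insert_of_mem (Finset.mem_insert_self _ _)
      · exact Finset.mem_insert_of_mem (Finset.mem_insert_of_mem (hID ha))
    · have hpair : (G.induce ({x, y} : Set V)).Connected :=
        SimpleGraph.induce_pair_connected_of_adj hadjxy
      have hu' : (G.induce ((↑D : Set V) ∪ {x, y})).Connected :=
        SimpleGraph.connected_induce_union (SimpleGraph.Connected.preconnected hconn) hpair.preconnected (Finset.mem_coe.mpr huD)
          (Set.mem_insert x {y}) hux
      have hset : (↑(insert x (insert y D)) : Set V) = (↑D : Set V) ∪ {x, y} := by
        ext a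
        simp only [Finset.coe_insert, Set.mem_insert_iff, Set.mem_union, Finset.mem_coe,
          Set.mem_singleton_iff]
        tauto
      rw [IsConnSet, hset]
      exact hu'
    · intro a ha b hb hab
      simp only [Finset.coe_insert, Set.mem_insert_iff, Finset.mem_coe] at ha hb
      rcases ha with rfl | ha <;> rcases hb with rfl | hb
      · exact absurd rfl hab
      · exact fun hadj => hynb b (hID hb) hadj.symm
      · exact fun hadj => hynb a (hID ha) hadj
      · exact hind ha hb hab
    · have h1 : x ∉ insert y D := by simp [hxy, hxD]
      have h2 : y ∉ D := hyD
      rw [Finset.card_insert_of_notMem h1, Finset.card_insert_of_notMem h2,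
        Finset.card_insert_of_notMem hyI]
      omega

lemma la_mono {s s' : Finset V} (h : s ⊆ s') : la G s ≤ la G s' := by
  obtain ⟨t, hts, hind, hc⟩ := exists_la_witness (G := G) s
  rw [← hc]; exact card_le_la (hts.trans h) hind

lemma coef_step {c a m n : ℕ} (ha : 1 ≤ a) (hmn : m ≤ n) (h : c + m ≤ 2*a*m) :
    c ≤ (2*a-1)*n := by
  have h2 : 2*a = (2*a-1) + 1 := by omega
  set b := 2*a-1 with hbd
  have h3' : 2*a*m = b*m + m := by rw [h2, Nat.add_mul, Nat.one_mul]
  have h4 : c ≤ b*m := by omega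
  exact h4.trans (Nat.mul_le_mul_left _ hmn)

lemma main_lemma : ∀ (k : ℕ) (s : Finset V), s.card ≤ k →
    ∃ n, MIn G s n ∧ s.card + n ≤ 2 * la G s * n := by
  classical
  intro k
  induction k with
  | zero =>
    intro s hk
    have : s = ∅ := Finset.card_eq_zero.mp (Nat.le_zero.mp hk)
    subst this
    exact ⟨0, mIn_zero _, by simp⟩
  | succ k ih =>
    intro s hk
    rcases s.eq_empty_or_nonempty with rfl | ⟨v, hv⟩
    · exact ⟨0, mIn_zero _, by simp⟩
    have hv' : v ∈ (↑s : Set V) := Finset.mem_coe.mpr hv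
    set C : Finset V := s.filter
      (fun w => ∃ h : w ∈ (↑s : Set V), (G.induce (↑s : Set V)).Reachable ⟨v, hv'⟩ ⟨w, h⟩)
      with hCdef
    have hCs : C ⊆ s := Finset.filter_subset _ _
    have hvC : v ∈ C := by
      rw [hCdef, Finset.mem_filter]
      exact ⟨hv, hv', SimpleGraph.Reachable.refl _⟩
    have hclose : ∀ a ∈ C, ∀ b ∈ s, G.Adj a b → b ∈ C := by
      intro a haC b hbs hadj
      rw [hCdef, Finset.mem_filter] at haC ⊢
      obtain ⟨has, ha', hreach⟩ := haC
      have hbs' : b ∈ (↑s : Set V) := Finset.mem_coe.mpr hbs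
      refine ⟨hbs, hbs', hreach.trans ?_⟩
      exact SimpleGraph.Adj.reachable (by simpa using hadj :
        (G.induce (↑s : Set V)).Adj ⟨a, ha'⟩ ⟨b, hbs'⟩)
    by_cases hCeq : C = s
    · -- connected case
      have hconn : (G.induce (↑s : Set V)).Connected := by
        have hne : Nonempty ↥(↑s : Set V) := ⟨⟨v, hv'⟩⟩
        refine SimpleGraph.Connected.mk fun a b => ?_
        have reach : ∀ (c : ↥(↑s : Set V)),
            (G.induce (↑s : Set V)).Reachable ⟨v, hv'⟩ c := by
          intro c
          have hcC : (c : V) ∈ C := by rw [hCeq]; exact Finset.mem_coe.mp c.2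
          rw [hCdef, Finset.mem_filter] at hcC
          obtain ⟨-, h', hr⟩ := hcC
          exact hr
        exact (reach a).symm.trans (reach b)
      obtain ⟨D', I', hD's, hI'D', hconnD', hindI', hcardD', hdom'⟩ :=
        grow hconn (s \ ({v} : Finset V)).card {v} {v} le_rfl
          (Finset.singleton_subset_iff.mpr hv) le_rfl
          (by rw [Finset.coe_singleton]; exact isConnSet_singleton_s10 v)
          (by rw [Finset.coe_singleton]; exact Set.pairwise_singleton _ _)
          (by simp)
      have hI'ne : 1 ≤ I'.card := by omega
      have hD'ne : D'.Nonempty := Finset.card_pos.mp (by omega)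
      set R : Finset V := s \ D' with hRdef
      have hRcard : R.card + D'.card = s.card := Finset.card_sdiff_add_card_eq_card hD's
      have hRlt : R.card ≤ k := by
        have : 1 ≤ D'.card := Finset.card_pos.mpr hD'ne
        omega
      obtain ⟨n, ⟨B, hBne, hBconn, hBsub, hBdisj, hBadj⟩, hineq⟩ := ih R hRlt
      set A := la G s with hA
      have hlaR : la G R ≤ A := la_mono (Finset.sdiff_subset)
      have hD'bound : D'.card + 1 ≤ 2 * A := by
        have : I'.card ≤ A := card_le_la (hI'D'.trans hD's) hindI'
        omega
      -- construct the bigger minor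
      refine ⟨n + 1, ⟨fun i => if h : (i : ℕ) < n then B ⟨i, h⟩ else (↑D' : Set V),
        ?_, ?_, ?_, ?_, ?_⟩, ?_⟩
      · intro i
        by_cases h : (i : ℕ) < n
        · simpa [h] using hBne ⟨i, h⟩
        · simpa [h] using Finset.coe_nonempty.mpr hD'ne
      · intro i
        by_cases h : (i : ℕ) < n
        · simpa [h] using hBconn ⟨i, h⟩
        · simpa [h] using hconnD'
      · intro i
        by_cases h : (i : ℕ) < n
        · simp only [h, dif_pos]
          exact (hBsub ⟨i, h⟩).trans (by exact_mod_cast Finset.sdiff_subset)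
        · simp only [h, dif_neg, not_false_iff]
          exact_mod_cast hD's
      · intro i j hij
        have hBR : ∀ (l : Fin n), B l ⊆ (↑R : Set V) := hBsub
        have hRD' : ∀ a ∈ (↑R : Set V), a ∉ (↑D' : Set V) := by
          intro a ha
          simp only [hRdef, Finset.coe_sdiff, Set.mem_diff] at ha
          exact fun hc => ha.2 (Finset.mem_coe.mp hc)
        by_cases h : (i : ℕ) < n <;> by_cases h' : (j : ℕ) < n
        · simp only [h, h', dif_pos]
          exact hBdisj (fun hc => hij (Fin.ext (by simpa using congrArg Fin.val hc)))
        · simp only [h, h', dif_pos, dif_neg, not_false_iff]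
          exact Set.disjoint_left.mpr (fun a ha => hRD' a (hBR ⟨i, h⟩ ha))
        · simp only [h, h', dif_pos, dif_neg, not_false_iff]
          exact Set.disjoint_right.mpr (fun a ha => hRD' a (hBR ⟨j, h'⟩ ha))
        · exfalso
          apply hij
          have hi : (i : ℕ) = n := by omega
          have hj : (j : ℕ) = n := by omega
          exact Fin.ext (hi.trans hj.symm)
      · intro i j hij
        have hedge : ∀ (l : Fin n), ∃ u ∈ B l, ∃ w ∈ (↑D' : Set V), G.Adj u w := by
          intro l
          obtain ⟨a, ha⟩ := hBne l
          have haR : a ∈ R := Finset.mem_coe.mp (hBsub l ha)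
          have has : a ∈ s := (Finset.sdiff_subset) haR
          have haD' : a ∉ D' := (Finset.mem_sdiff.mp haR).2
          obtain ⟨u, huD', hadj⟩ := hdom' a has haD'
          exact ⟨a, ha, u, Finset.mem_coe.mpr huD', hadj.symm⟩
        by_cases h : (i : ℕ) < n <;> by_cases h' : (j : ℕ) < n
        · simp only [h, h', dif_pos]
          exact hBadj (fun hc => hij (Fin.ext (by simpa using congrArg Fin.val hc)))
        · simp only [h, h', dif_pos, dif_neg, not_false_iff]
          exact hedge ⟨i, h⟩
        · simp only [h, h', dif_pos, dif_neg, not_false_iff]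
          obtain ⟨u, hu, w, hw, hadj⟩ := hedge ⟨j, h'⟩
          exact ⟨w, hw, u, hu, hadj.symm⟩
        · exfalso
          apply hij
          have hi : (i : ℕ) = n := by omega
          have hj : (j : ℕ) = n := by omega
          exact Fin.ext (hi.trans hj.symm)
      · -- arithmetic
        have h1 : R.card + n ≤ 2 * A * n := by
          calc R.card + n ≤ 2 * la G R * n := hineq
            _ ≤ 2 * A * n := Nat.mul_le_mul_right n (by omega)
        have h2 : 2 * A * (n + 1) = 2 * A * n + 2 * A := by ring
        omega
    · -- disconnected case
      have hRne : (s \ C).Nonempty := Finset.sdiff_nonempty.mpr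
        (fun h => hCeq (Finset.Subset.antisymm hCs h))
      set R : Finset V := s \ C with hRdef
      have hCne : C.Nonempty := ⟨v, hvC⟩
      have hCcard : C.card < s.card := Finset.card_lt_card
        (Finset.ssubset_iff_subset_ne.mpr ⟨hCs, hCeq⟩)
      have hRCs : R.card + C.card = s.card := Finset.card_sdiff_add_card_eq_card hCs
      have hRcard : R.card < s.card := by
        have : 1 ≤ C.card := Finset.card_pos.mpr hCne
        omega
      obtain ⟨n₁, hm₁, hq₁⟩ := ih C (by omega)
      obtain ⟨n₂, hm₂, hq₂⟩ := ih R (by omega)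
      have hn₁ : 1 ≤ n₁ := mIn_pos hm₁ hq₁ hCne
      have hn₂ : 1 ≤ n₂ := mIn_pos hm₂ hq₂ hRne
      set a₁ := la G C with ha₁
      set a₂ := la G R with ha₂
      have ha₁1 : 1 ≤ a₁ := one_le_la hCne
      have ha₂1 : 1 ≤ a₂ := one_le_la hRne
      -- la C + la R ≤ la s
      have hsum : a₁ + a₂ ≤ la G s := by
        obtain ⟨t₁, ht₁C, hind₁, hc₁⟩ := exists_la_witness (G := G) C
        obtain ⟨t₂, ht₂R, hind₂, hc₂⟩ := exists_la_witness (G := G) R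
        have hdisj : Disjoint t₁ t₂ := Finset.disjoint_left.mpr (by
          intro a ha₁' ha₂'
          exact (Finset.mem_sdiff.mp (ht₂R ha₂')).2 (ht₁C ha₁'))
        have hind : _root_.IsIndepSet G ↑(t₁ ∪ t₂) := by
          intro a ha b hb hab
          simp only [Finset.coe_union, Set.mem_union, Finset.mem_coe] at ha hb
          rcases ha with ha | ha <;> rcases hb with hb | hb
          · exact hind₁ ha hb hab
          · intro hadj
            have hbC : b ∈ C := hclose a (ht₁C ha) b ((Finset.sdiff_subset) (ht₂R hb)) hadj
            exact (Finset.mem_sdiff.mp (ht₂R hb)).2 hbC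
          · intro hadj
            have haC : a ∈ C := hclose b (ht₁C hb) a ((Finset.sdiff_subset) (ht₂R ha)) hadj.symm
            exact (Finset.mem_sdiff.mp (ht₂R ha)).2 haC
          · exact hind₂ ha hb hab
        have hsub : t₁ ∪ t₂ ⊆ s := Finset.union_subset (ht₁C.trans hCs)
          (ht₂R.trans (Finset.sdiff_subset))
        have := card_le_la hsub hind
        rwa [Finset.card_union_of_disjoint hdisj, hc₁, hc₂] at this
      set n := max n₁ n₂ with hn
      have hminor : MIn G s n := by
        rcases le_total n₁ n₂ with h | h
        · rw [hn, max_eq_right h]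
          exact mIn_mono (Finset.sdiff_subset) hm₂
        · rw [hn, max_eq_left h]
          exact mIn_mono hCs hm₁
      refine ⟨n, hminor, ?_⟩
      have hc1 : C.card ≤ (2*a₁-1) * n := coef_step ha₁1 (le_max_left n₁ n₂) hq₁
      have hc2 : R.card ≤ (2*a₂-1) * n := coef_step ha₂1 (le_max_right n₁ n₂) hq₂
      have hmul : ((2*a₁-1) + (2*a₂-1) + 1) * n = (2*a₁-1)*n + (2*a₂-1)*n + n := by ring
      have hK : (2*a₁-1) + (2*a₂-1) + 1 ≤ 2 * la G s := by omega
      calc s.card + n = C.card + R.card + n := by omega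
        _ ≤ (2*a₁-1)*n + (2*a₂-1)*n + n := by omega
        _ = ((2*a₁-1) + (2*a₂-1) + 1) * n := hmul.symm
        _ ≤ 2 * la G s * n := Nat.mul_le_mul_right n hK

end All

theorem stmt_10 {V : Type*} [Fintype V] [Nonempty V] (G : SimpleGraph V) :
    (Fintype.card V : ℤ) ≤ (2 * _root_.indepNum G - 1) * hadwigerNum G := by
  classical
  obtain ⟨n, hmin, hineq⟩ := main_lemma (G := G) Finset.univ.card Finset.univ le_rfl
  have hbddI : BddAbove {n | ∃ s : Finset V, _root_.IsIndepSet G ↑s ∧ s.card = n} := by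
    refine ⟨Fintype.card V, ?_⟩
    rintro m ⟨t, -, hc⟩
    exact hc ▸ Finset.card_le_univ t
  have hlaeq : la G Finset.univ = _root_.indepNum G := by
    apply le_antisymm
    · obtain ⟨t, -, hind, hc⟩ := exists_la_witness (G := G) Finset.univ
      rw [← hc]
      exact le_csSup hbddI ⟨t, hind, rfl⟩
    · refine csSup_le ⟨0, ∅, by simp [_root_.IsIndepSet], by simp⟩ ?_
      rintro m ⟨t, hind, hc⟩
      exact hc ▸ card_le_la (Finset.subset_univ t) hind
  have hminor : HasCliqueMinor G n := by
    obtain ⟨B, h1, h2, h3, h4, h5⟩ := hmin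
    exact ⟨B, h1, h2, h4, h5⟩
  have hbddH : BddAbove {n | HasCliqueMinor G n} := by
    refine ⟨Fintype.card V, ?_⟩
    rintro m ⟨B, h1, -, h3, -⟩
    have hinj : Function.Injective (fun i => (h1 i).choose) := by
      intro i j hij
      by_contra hne
      have hd := h3 hne
      have hij' : (h1 i).choose = (h1 j).choose := hij
      exact (Set.disjoint_left.mp hd (h1 i).choose_spec) (hij' ▸ (h1 j).choose_spec)
    calc m = Fintype.card (Fin m) := (Fintype.card_fin m).symm
      _ ≤ Fintype.card V := Fintype.card_le_of_injective _ hinj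
  have hnh : n ≤ hadwigerNum G := le_csSup hbddH hminor
  have huniv : (Finset.univ : Finset V).Nonempty := Finset.univ_nonempty
  have hα1 : 1 ≤ _root_.indepNum G := hlaeq ▸ one_le_la huniv
  have hn1 : 1 ≤ n := mIn_pos hmin hineq huniv
  have hcard : (Finset.univ : Finset V).card = Fintype.card V := Finset.card_univ
  rw [hlaeq, hcard] at hineq
  have h1 : (Fintype.card V : ℤ) + n ≤ 2 * (_root_.indepNum G : ℤ) * n := by exact_mod_cast hineq
  have h2 : (n : ℤ) ≤ (hadwigerNum G : ℤ) := by exact_mod_cast hnh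
  have hα1' : (1 : ℤ) ≤ (_root_.indepNum G : ℤ) := by exact_mod_cast hα1
  have h3 : (2 * (_root_.indepNum G : ℤ) - 1) * n ≤ (2 * (_root_.indepNum G : ℤ) - 1) * hadwigerNum G :=
    mul_le_mul_of_nonneg_left h2 (by linarith)
  nlinarith [h1, h3]
end
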